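/- arXiv:2605.02645 — 2 statements merged into one kernel-verified Lean document; each statement's English description precedes it below -/
import Mathlib

section
/- Real t-Schur decomposition: every real tensor A ∈ ℝ^{n×n×p} admits a factorization A = U * T * Uᵀ under the t-product, where U ∈ ℝ^{n×n×p} is an orthogonal tensor and T ∈ ℝ^{n×n×p} is f-quasi-triangular, i.e., there is a partition n = n_1 + … + n_m with each n_j ∈ {1,2} such that every frontal slice of T is upper block triangular with respect to this fixed partition. -/
open Matrix Complex BigOperators Kronecker

/-- A third-order tensor, represented by its frontal slices (indexed cyclically). -/
abbrev Tensor (F : Type*) (m n p : ℕ) : Type _ :=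
  ZMod p → Matrix (Fin m) (Fin n) F

/-- The block-circulant matrix of a tensor: block (i,j) is slice (i - j mod p). -/
def bcirc {F : Type*} {m n p : ℕ} (A : Tensor F m n p) :
    Matrix (ZMod p × Fin m) (ZMod p × Fin n) F :=
  Matrix.of fun ir jc => A (ir.1 - jc.1) ir.2 jc.2

/-- The t-product of tensors: (A*B)^{(i)} = ∑_j A^{(i-j)} B^{(j)}. -/
def tpr {F : Type*} [CommRing F] {m n l p : ℕ} [NeZero p]
    (A : Tensor F m n p) (B : Tensor F n l p) : Tensor F m l p :=
  fun i => ∑ j : ZMod p, A (i - j) * B j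

/-- The identity tensor: first frontal slice is I_n, others are zero. -/
def tId (F : Type*) [CommRing F] (n p : ℕ) [NeZero p] : Tensor F n n p :=
  fun i => if i = 0 then 1 else 0

/-- Tensor transpose: transpose each slice and reverse the order of slices 2..p. -/
def tT {F : Type*} {m n p : ℕ} (A : Tensor F m n p) : Tensor F n m p :=
  fun i => (A (-i))ᵀ

/-- ξ = e^{-2πi/p}. -/
noncomputable def xi (p : ℕ) : ℂ :=
  Complex.exp (-(2 * Real.pi * Complex.I) / p)

/-- The normalized DFT matrix of order p. -/
noncomputable def Fmat (p : ℕ) : Matrix (ZMod p) (ZMod p) ℂ :=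
  Matrix.of fun j k => (1 / (Real.sqrt p : ℂ)) * xi p ^ (j.val * k.val)

/-- The Fourier blocks of a complex tensor: A_i = ∑_k ξ^{(i)(k)} A^{(k)} (0-based). -/
noncomputable def fblock {m n p : ℕ} [NeZero p] (A : Tensor ℂ m n p) (i : ZMod p) :
    Matrix (Fin m) (Fin n) ℂ :=
  ∑ k : ZMod p, xi p ^ (i.val * k.val) • A k

/-- Complexification of a real tensor. -/
def cplx {m n p : ℕ} (A : Tensor ℝ m n p) : Tensor ℂ m n p :=
  fun i => (A i).map (Complex.ofReal)

/-- Block diagonal matrix with p equal-size blocks. -/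
def blockDiag {m n p : ℕ} (M : ZMod p → Matrix (Fin m) (Fin n) ℂ) :
    Matrix (ZMod p × Fin m) (ZMod p × Fin n) ℂ :=
  Matrix.of fun ir jc => if ir.1 = jc.1 then M ir.1 ir.2 jc.2 else 0

/-- Entrywise conjugation of a complex matrix. -/
def conjM {m n : ℕ} (M : Matrix (Fin m) (Fin n) ℂ) : Matrix (Fin m) (Fin n) ℂ :=
  M.map (starRingEnd ℂ)

/-- A complex matrix is real if all entries have zero imaginary part. -/
def IsRealM {m n : ℕ} (M : Matrix (Fin m) (Fin n) ℂ) : Prop :=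
  ∀ r c, (M r c).im = 0


set_option linter.unusedSectionVars false
set_option maxHeartbeats 1000000

section EE
variable {p : ℕ} [NeZero p]

lemma xi_prim : IsPrimitiveRoot (xi p) p := by
  rw [xi, neg_div, Complex.exp_neg]
  exact (Complex.isPrimitiveRoot_exp p (NeZero.ne p)).inv

noncomputable def ee (p : ℕ) (a : ZMod p) : ℂ := xi p ^ a.val

lemma xi_pow_mod (m : ℕ) : xi p ^ m = xi p ^ (m % p) := by
  conv_lhs => rw [← Nat.div_add_mod m p]
  rw [pow_add, pow_mul, (xi_prim (p := p)).pow_eq_one, one_pow, one_mul]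

lemma ee_add (a b : ZMod p) : ee p (a + b) = ee p a * ee p b := by
  rw [ee, ee, ee, ZMod.val_add, ← xi_pow_mod, pow_add]

lemma ee_zero : ee p 0 = 1 := by
  simp [ee, ZMod.val_zero]

lemma ee_mul_val (i k : ZMod p) : xi p ^ (i.val * k.val) = ee p (i * k) := by
  rw [ee, ZMod.val_mul, ← xi_pow_mod]

lemma ee_ne_one {a : ZMod p} (h : a ≠ 0) : ee p a ≠ 1 := by
  refine (xi_prim (p := p)).pow_ne_one_of_pos_of_lt ?_ (ZMod.val_lt a)
  exact fun h0 => h ((ZMod.val_eq_zero a).mp h0)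

lemma ee_mul_ee_neg (a : ZMod p) : ee p a * ee p (-a) = 1 := by
  rw [← ee_add]; simp [ee_zero]

lemma xi_ne_zero' : xi p ≠ 0 := Complex.exp_ne_zero _

lemma ee_ne_zero' (a : ZMod p) : ee p a ≠ 0 := pow_ne_zero _ xi_ne_zero'

lemma ee_neg (a : ZMod p) : ee p (-a) = (ee p a)⁻¹ := by
  rw [inv_eq_one_div, eq_div_iff (ee_ne_zero' a), mul_comm]; exact ee_mul_ee_neg a

lemma conj_xi : (starRingEnd ℂ) (xi p) = (xi p)⁻¹ := by
  rw [xi, ← Complex.exp_conj, ← Complex.exp_neg]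
  congr 1
  simp [map_div₀, Complex.conj_I, Complex.conj_ofReal, map_ofNat]
  ring

lemma conj_ee (a : ZMod p) : (starRingEnd ℂ) (ee p a) = ee p (-a) := by
  rw [ee, map_pow, conj_xi, ee_neg, ee, inv_pow]

lemma xi_ne_zero : xi p ≠ 0 := Complex.exp_ne_zero _

lemma ee_ne_zero (a : ZMod p) : ee p a ≠ 0 := pow_ne_zero _ xi_ne_zero

lemma sum_ee (a : ZMod p) : (∑ k : ZMod p, ee p (a * k)) = if a = 0 then (p : ℂ) else 0 := by
  split_ifs with h
  · subst h; simp [ee_zero, ZMod.card]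
  · have key : (∑ k : ZMod p, ee p (a * k)) * ee p a = ∑ k : ZMod p, ee p (a * k) := by
      rw [Finset.sum_mul]
      refine Fintype.sum_equiv (Equiv.addRight 1) _ _ fun k => ?_
      rw [← ee_add, Equiv.coe_addRight, mul_add, mul_one]
    have := mul_eq_zero.mp (by linear_combination key : (∑ k : ZMod p, ee p (a * k)) * (ee p a - 1) = 0)
    rcases this with h1 | h2
    · exact h1
    · exact absurd (by linear_combination h2) (ee_ne_one h)

end EE

section Fourier
variable {m n l p : ℕ} [NeZero p]

lemma fblock_eq (A : Tensor ℂ m n p) (i : ZMod p) :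
    fblock A i = ∑ k : ZMod p, ee p (i * k) • A k :=
  Finset.sum_congr rfl fun k _ => by rw [ee_mul_val]

lemma fblock_apply (A : Tensor ℂ m n p) (i : ZMod p) (r : Fin m) (c : Fin n) :
    fblock A i r c = ∑ k : ZMod p, ee p (i * k) * A k r c := by
  rw [fblock_eq]
  simp [Matrix.sum_apply]

/-- Inverse discrete Fourier transform of a family of matrices. -/
noncomputable def invT {m n p : ℕ} [NeZero p] (M : ZMod p → Matrix (Fin m) (Fin n) ℂ) :
    Tensor ℂ m n p :=
  fun k => (p : ℂ)⁻¹ • ∑ i : ZMod p, ee p (-(i * k)) • M i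

lemma invT_apply (M : ZMod p → Matrix (Fin m) (Fin n) ℂ) (k : ZMod p) (r : Fin m) (c : Fin n) :
    invT M k r c = (p : ℂ)⁻¹ * ∑ i : ZMod p, ee p (-(i * k)) * M i r c := by
  simp [invT, Matrix.sum_apply]

lemma pC_ne_zero : (p : ℂ) ≠ 0 := Nat.cast_ne_zero.mpr (NeZero.ne p)

lemma sum_ee_mul (j i : ZMod p) :
    ∑ k : ZMod p, ee p (j * k) * ee p (-(i * k)) = if i = j then (p : ℂ) else 0 := by
  have h : ∀ k : ZMod p, ee p (j * k) * ee p (-(i * k)) = ee p ((j - i) * k) := by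
    intro k
    rw [← ee_add]
    congr 1
    ring
  simp_rw [h, sum_ee, sub_eq_zero]
  simp [eq_comm]

lemma fblock_invT (M : ZMod p → Matrix (Fin m) (Fin n) ℂ) (j : ZMod p) :
    fblock (invT M) j = M j := by
  ext r c
  rw [fblock_apply]
  have h1 : ∀ k : ZMod p, ee p (j * k) * invT M k r c
      = (p : ℂ)⁻¹ * ∑ i : ZMod p, ee p (j * k) * ee p (-(i * k)) * M i r c := by
    intro k
    rw [invT_apply, mul_left_comm, Finset.mul_sum]
    simp [mul_assoc]
  simp_rw [h1]
  rw [← Finset.mul_sum, Finset.sum_comm]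
  have h2 : ∀ i : ZMod p, ∑ k : ZMod p, ee p (j * k) * ee p (-(i * k)) * M i r c
      = (if i = j then (p : ℂ) else 0) * M i r c := by
    intro i
    rw [← Finset.sum_mul, sum_ee_mul]
  simp_rw [h2, ite_mul, zero_mul]
  rw [Finset.sum_ite_eq' Finset.univ j (fun i => (p : ℂ) * M i r c)]
  simp [← mul_assoc, inv_mul_cancel₀ (pC_ne_zero (p := p))]

lemma invT_fblock (C : Tensor ℂ m n p) : invT (fblock C) = C := by
  funext k
  ext r c
  rw [invT_apply]
  have h1 : ∀ i : ZMod p, ee p (-(i * k)) * fblock C i r c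
      = ∑ l : ZMod p, ee p (i * l) * ee p (-(i * k)) * C l r c := by
    intro i
    rw [fblock_apply, Finset.mul_sum]
    apply Finset.sum_congr rfl
    intro l _
    ring
  simp_rw [h1]
  rw [Finset.sum_comm]
  have h2 : ∀ l : ZMod p, ∑ i : ZMod p, ee p (i * l) * ee p (-(i * k)) * C l r c
      = (if k = l then (p : ℂ) else 0) * C l r c := by
    intro l
    rw [← Finset.sum_mul]
    have : ∀ i : ZMod p, ee p (i * l) * ee p (-(i * k)) = ee p (l * i) * ee p (-(k * i)) := by
      intro i; rw [mul_comm i l, mul_comm i k]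
    rw [Finset.sum_congr rfl fun i _ => this i, sum_ee_mul]
  simp_rw [h2, ite_mul, zero_mul]
  rw [Finset.sum_ite_eq Finset.univ k (fun l => (p : ℂ) * C l r c)]
  simp [← mul_assoc, inv_mul_cancel₀ (pC_ne_zero (p := p))]

lemma fblock_injective : Function.Injective (fblock (m := m) (n := n) (p := p)) := by
  intro A B h
  rw [← invT_fblock A, ← invT_fblock B, h]

lemma fblock_tpr (A : Tensor ℂ m n p) (B : Tensor ℂ n l p) (i : ZMod p) :
    fblock (tpr A B) i = fblock A i * fblock B i := by
  rw [fblock_eq, fblock_eq, fblock_eq]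
  unfold tpr
  calc ∑ k : ZMod p, ee p (i * k) • ∑ j : ZMod p, A (k - j) * B j
      = ∑ k : ZMod p, ∑ j : ZMod p, ee p (i * k) • (A (k - j) * B j) := by
        simp_rw [Finset.smul_sum]
    _ = ∑ j : ZMod p, ∑ k : ZMod p, ee p (i * k) • (A (k - j) * B j) := Finset.sum_comm
    _ = ∑ j : ZMod p, ∑ k : ZMod p, ee p (i * (k + j)) • (A k * B j) := by
        refine Finset.sum_congr rfl fun j _ => ?_
        refine Fintype.sum_equiv (Equiv.subRight j) _ _ fun k => ?_
        simp
    _ = ∑ j : ZMod p, ∑ k : ZMod p, (ee p (i * k) • A k) * (ee p (i * j) • B j) := by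
        refine Finset.sum_congr rfl fun j _ => Finset.sum_congr rfl fun k _ => ?_
        have hik : i * (k + j) = i * k + i * j := by ring
        rw [hik, ee_add, Matrix.smul_mul, Matrix.mul_smul, smul_smul]
    _ = ∑ k : ZMod p, ∑ j : ZMod p, (ee p (i * k) • A k) * (ee p (i * j) • B j) :=
        Finset.sum_comm
    _ = (∑ k : ZMod p, ee p (i * k) • A k) * ∑ j : ZMod p, ee p (i * j) • B j := by
        rw [Matrix.sum_mul]
        simp_rw [Matrix.mul_sum]

lemma fblock_tId (i : ZMod p) : fblock (tId ℂ n p) i = 1 := by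
  rw [fblock_eq]
  unfold tId
  rw [Finset.sum_eq_single 0]
  · simp [ee_zero]
  · intro k _ hk; simp [hk]
  · simp

lemma cplx_tpr (A : Tensor ℝ m n p) (B : Tensor ℝ n l p) :
    cplx (tpr A B) = tpr (cplx A) (cplx B) := by
  funext i
  ext r c
  simp only [cplx, tpr, Matrix.map_apply, Matrix.sum_apply, Matrix.mul_apply]
  push_cast
  rfl

lemma cplx_tT (A : Tensor ℝ m n p) : cplx (tT A) = tT (cplx A) := rfl

lemma cplx_tId : cplx (tId ℝ n p) = tId ℂ n p := by
  funext i
  ext r c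
  by_cases h : i = 0 <;> simp [cplx, tId, h, Matrix.one_apply, apply_ite]

lemma cplx_injective : Function.Injective (cplx (m := m) (n := n) (p := p)) := by
  intro A B h
  funext i
  ext r c
  have := congrFun h i
  have h2 := congrFun (congrFun this r) c
  simp only [cplx, Matrix.map_apply] at h2
  exact_mod_cast h2

lemma fblock_cplx_tT (R : Tensor ℝ m n p) (i : ZMod p) :
    fblock (cplx (tT R)) i = (fblock (cplx R) i)ᴴ := by
  ext r c
  rw [fblock_apply, Matrix.conjTranspose_apply, fblock_apply]
  rw [show (star (∑ k : ZMod p, ee p (i * k) * cplx R k c r))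
      = (starRingEnd ℂ) (∑ k : ZMod p, ee p (i * k) * cplx R k c r) from rfl, map_sum]
  refine Fintype.sum_equiv (Equiv.neg (ZMod p)) _ _ fun k => ?_
  simp only [Equiv.neg_apply, _root_.map_mul, conj_ee]
  rw [show (-(i * -k)) = i * k by ring]
  congr 1
  simp [cplx, tT, Matrix.map_apply, Complex.conj_ofReal]

lemma fblock_cplx_conj (R : Tensor ℝ m n p) (i : ZMod p) :
    fblock (cplx R) (-i) = conjM (fblock (cplx R) i) := by
  ext r c
  rw [fblock_apply, conjM, Matrix.map_apply, fblock_apply, map_sum]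
  refine Finset.sum_congr rfl fun k _ => ?_
  rw [_root_.map_mul, conj_ee]
  congr 1
  · congr 1; ring
  · simp [cplx, Matrix.map_apply, Complex.conj_ofReal]

lemma invT_isReal (M : ZMod p → Matrix (Fin m) (Fin n) ℂ)
    (h : ∀ i, M (-i) = conjM (M i)) (k : ZMod p) : IsRealM (invT M k) := by
  intro r c
  rw [← Complex.conj_eq_iff_im]
  rw [invT_apply, _root_.map_mul, map_sum]
  congr 1
  · simp
  refine Fintype.sum_equiv (Equiv.neg (ZMod p)) _ _ fun i => ?_
  simp only [Equiv.neg_apply]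
  rw [h i, conjM, Matrix.map_apply, _root_.map_mul, conj_ee]
  congr 2
  ring

lemma isReal_map_re {a b : ℕ} (M : Matrix (Fin a) (Fin b) ℂ) (h : IsRealM M) :
    (M.map Complex.re).map (Complex.ofReal) = M := by
  ext r c
  simp only [Matrix.map_apply]
  exact Complex.ext rfl (by simpa using (h r c).symm)

end Fourier

section Schur
open Module

/-- Hypothesis: every endomorphism of a nonzero f.d. space has an invariant
subspace of dimension 1 or 2. -/
def Inv2Hyp (𝕜 : Type) [Field 𝕜] : Prop :=
  ∀ (V : Type) [AddCommGroup V] [Module 𝕜 V] [FiniteDimensional 𝕜 V],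
    ∀ (f : V →ₗ[𝕜] V), 1 ≤ finrank 𝕜 V →
    ∃ W : Submodule 𝕜 V, (∀ x ∈ W, f x ∈ W) ∧ 1 ≤ finrank 𝕜 ↥W ∧ finrank 𝕜 ↥W ≤ 2

lemma exists_invariant_two (𝕜 : Type) [Field 𝕜] (hinv : Inv2Hyp 𝕜) :
    ∀ (N : ℕ) (V : Type) [AddCommGroup V] [Module 𝕜 V] [FiniteDimensional 𝕜 V],
      finrank 𝕜 V ≤ N → 2 ≤ finrank 𝕜 V → ∀ f : V →ₗ[𝕜] V,
      ∃ W : Submodule 𝕜 V, (∀ x ∈ W, f x ∈ W) ∧ finrank 𝕜 ↥W = 2 := by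
  intro N
  induction N with
  | zero => intro V _ _ _ hle h2 f; omega
  | succ N ih =>
    intro V _ _ _ hle h2 f
    by_cases hN : finrank 𝕜 V ≤ N
    · exact ih V hN h2 f
    obtain ⟨W₀, hW₀inv, hW₀1, hW₀2⟩ := hinv V f (le_trans one_le_two h2)
    by_cases h2' : finrank 𝕜 ↥W₀ = 2
    · exact ⟨W₀, hW₀inv, h2'⟩
    have h1' : finrank 𝕜 ↥W₀ = 1 := by omega
    -- extract a generator t of W₀, an eigenvector of f
    obtain ⟨v, hv0, hvgen⟩ := finrank_eq_one_iff'.mp h1'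
    set t : V := (v : V) with ht
    have ht0 : t ≠ 0 := fun h => hv0 (Subtype.ext h)
    have htW : t ∈ W₀ := v.2
    obtain ⟨lam, hlam⟩ : ∃ lam : 𝕜, f t = lam • t := by
      obtain ⟨c, hc⟩ := hvgen ⟨f t, hW₀inv t htW⟩
      exact ⟨c, by simpa [ht] using congrArg (Subtype.val) hc.symm⟩
    set g : V →ₗ[𝕜] V := f - lam • LinearMap.id with hg
    have hgapp : ∀ x : V, g x = f x - lam • x := by
      intro x
      rw [hg, LinearMap.sub_apply, LinearMap.smul_apply, LinearMap.id_apply]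
    have hfg : ∀ x : V, f (g x) = g (f x) := by
      intro x; simp only [hgapp, map_sub, _root_.map_smul]
    have htK : t ∈ LinearMap.ker g := by
      rw [LinearMap.mem_ker, hgapp, hlam, sub_self]
    by_cases hker : 2 ≤ finrank 𝕜 ↥(LinearMap.ker g)
    · -- the eigenspace has dimension ≥ 2
      have hne : ¬ (LinearMap.ker g ≤ Submodule.span 𝕜 {t}) := by
        intro hle'
        have := Submodule.finrank_mono (R := 𝕜) hle'
        rw [finrank_span_singleton ht0] at this
        omega
      obtain ⟨s, hsK, hs⟩ := SetLike.not_le_iff_exists.mp hne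
      refine ⟨Submodule.span 𝕜 {t} ⊔ Submodule.span 𝕜 {s}, ?_, ?_⟩
      · intro x hx
        have hxK : x ∈ LinearMap.ker g := by
          refine (sup_le ?_ ?_ : _ ≤ LinearMap.ker g) hx
          · rw [Submodule.span_le, Set.singleton_subset_iff]; exact htK
          · rw [Submodule.span_le, Set.singleton_subset_iff]; exact hsK
        have hfx : f x = lam • x := by
          have h' := hgapp x
          rw [LinearMap.mem_ker.mp hxK] at h'
          exact sub_eq_zero.mp h'.symm
        rw [hfx]
        exact Submodule.smul_mem _ _ hx
      · have hs0 : s ≠ 0 := fun h => hs (h ▸ Submodule.zero_mem _)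
        have hub : finrank 𝕜 ↥(Submodule.span 𝕜 {t} ⊔ Submodule.span 𝕜 {s}) ≤ 2 := by
          have h1 := Submodule.finrank_sup_add_finrank_inf_eq
            (Submodule.span 𝕜 {t}) (Submodule.span 𝕜 {s})
          rw [finrank_span_singleton ht0, finrank_span_singleton hs0] at h1
          omega
        have hlb : 1 < finrank 𝕜 ↥(Submodule.span 𝕜 {t} ⊔ Submodule.span 𝕜 {s}) := by
          have hlt : Submodule.span 𝕜 {t} < Submodule.span 𝕜 {t} ⊔ Submodule.span 𝕜 {s} := by
            refine lt_of_le_of_ne le_sup_left ?_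
            intro hEq
            apply hs
            rw [hEq]
            exact Submodule.mem_sup_right (Submodule.mem_span_singleton_self s)
          have := Submodule.finrank_lt_finrank_of_lt hlt
          rw [finrank_span_singleton ht0] at this
          omega
        omega
    · -- ker has dimension 1; recurse on the range of g
      by_cases hV2 : finrank 𝕜 V = 2
      · refine ⟨⊤, fun x _ => Submodule.mem_top, by rw [finrank_top]; exact hV2⟩
      have hVN : finrank 𝕜 V = N + 1 := by omega
      have hK1 : finrank 𝕜 ↥(LinearMap.ker g) = 1 := by
        have hkb : LinearMap.ker g ≠ ⊥ := by
          intro hbot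
          rw [hbot] at htK
          exact ht0 (by simpa using htK)
        have hpos : 1 ≤ finrank 𝕜 ↥(LinearMap.ker g) := by
          by_contra hc
          push_neg at hc
          have h00 : finrank 𝕜 ↥(LinearMap.ker g) = 0 := by omega
          exact hkb (Submodule.finrank_eq_zero.mp h00)
        omega
      have hrange : finrank 𝕜 ↥(LinearMap.range g) = N := by
        have := LinearMap.finrank_range_add_finrank_ker g
        omega
      have hrinv : ∀ x ∈ LinearMap.range g, f x ∈ LinearMap.range g := by
        rintro x ⟨y, rfl⟩
        exact ⟨f y, (hfg y).symm⟩
      obtain ⟨W', hW'inv, hW'2⟩ := ih ↥(LinearMap.range g) (le_of_eq hrange)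
        (by omega) (f.restrict hrinv)
      refine ⟨W'.map (LinearMap.range g).subtype, ?_, ?_⟩
      · rintro x ⟨y, hyW', rfl⟩
        refine ⟨f.restrict hrinv y, hW'inv y hyW', ?_⟩
        rw [LinearMap.restrict_apply]
        rfl
      · rw [Submodule.finrank_map_subtype_eq]
        exact hW'2

end Schur

section Hinv
open Module

lemma span_pair_inv_aux {𝕜 V : Type} [Field 𝕜] [AddCommGroup V] [Module 𝕜 V]
    (f : V →ₗ[𝕜] V) (u w : V) (hu : f u ∈ Submodule.span 𝕜 ({u, w} : Set V))
    (hw : f w ∈ Submodule.span 𝕜 ({u, w} : Set V)) :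
    ∀ x ∈ Submodule.span 𝕜 ({u, w} : Set V), f x ∈ Submodule.span 𝕜 ({u, w} : Set V) := by
  intro x hx
  induction hx using Submodule.span_induction with
  | mem z hz =>
    rcases hz with h | h
    · rw [h]; exact hu
    · rw [Set.mem_singleton_iff.mp h]; exact hw
  | zero => rw [map_zero]; exact Submodule.zero_mem _
  | add a b _ _ ha hb => rw [map_add]; exact Submodule.add_mem _ ha hb
  | smul c a _ ha => rw [_root_.map_smul]; exact Submodule.smul_mem _ _ ha

lemma finrank_span_pair_le {𝕜 V : Type} [Field 𝕜] [AddCommGroup V] [Module 𝕜 V]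
    (u w : V) : finrank 𝕜 ↥(Submodule.span 𝕜 ({u, w} : Set V)) ≤ 2 := by
  classical
  rw [show ({u, w} : Set V) = insert u {w} from rfl, Submodule.span_insert]
  have h1 := Submodule.finrank_sup_add_finrank_inf_eq
    (Submodule.span 𝕜 ({u} : Set V)) (Submodule.span 𝕜 ({w} : Set V))
  have h2 : finrank 𝕜 ↥(Submodule.span 𝕜 ({u} : Set V)) ≤ 1 := by
    by_cases h : u = 0
    · rw [h, Submodule.span_zero_singleton]; simp
    · rw [finrank_span_singleton h]
  have h3 : finrank 𝕜 ↥(Submodule.span 𝕜 ({w} : Set V)) ≤ 1 := by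
    by_cases h : w = 0
    · rw [h, Submodule.span_zero_singleton]; simp
    · rw [finrank_span_singleton h]
  omega

lemma hinvC : Inv2Hyp ℂ := by
  intro V _ _ _ f hr
  haveI : Nontrivial V := by
    rw [← finrank_pos_iff (R := ℂ)]
    omega
  obtain ⟨mu, hmu⟩ := Module.End.exists_eigenvalue f
  obtain ⟨z, hz⟩ := hmu.exists_hasEigenvector
  refine ⟨Submodule.span ℂ {z}, ?_, ?_, ?_⟩
  · intro x hx
    obtain ⟨c, rfl⟩ := Submodule.mem_span_singleton.mp hx
    rw [_root_.map_smul, hz.apply_eq_smul]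
    exact Submodule.smul_mem _ _ (Submodule.smul_mem _ _ (Submodule.mem_span_singleton_self z))
  · rw [finrank_span_singleton hz.2]
  · rw [finrank_span_singleton hz.2]; omega

lemma hinvR : Inv2Hyp ℝ := by
  intro V _ _ _ f hr
  set k := finrank ℝ V with hk
  haveI : Nonempty (Fin k) := ⟨⟨0, hr⟩⟩
  let b : Basis (Fin k) ℝ V := Module.finBasis ℝ V
  set M : Matrix (Fin k) (Fin k) ℝ := LinearMap.toMatrix b b f with hM
  set M' : Matrix (Fin k) (Fin k) ℂ := M.map (Complex.ofReal) with hM'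
  obtain ⟨mu, hmu⟩ := Module.End.exists_eigenvalue (Matrix.mulVecLin M')
  obtain ⟨z, hz⟩ := hmu.exists_hasEigenvector
  have hzeq : M'.mulVec z = mu • z := hz.apply_eq_smul
  set x : Fin k → ℝ := fun i => (z i).re with hx
  set y : Fin k → ℝ := fun i => (z i).im with hy
  have hmx : M.mulVec x = mu.re • x - mu.im • y := by
    funext i
    have h1 : (M'.mulVec z i).re = (mu * z i).re := by
      rw [hzeq]; rfl
    have h2 : (M'.mulVec z i).re = (M.mulVec x) i := by
      simp only [Matrix.mulVec, dotProduct, hM', Matrix.map_apply, Complex.re_sum]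
      refine Finset.sum_congr rfl fun j _ => ?_
      simp [Complex.mul_re, hx]
    rw [h2] at h1
    rw [h1, Complex.mul_re]
    simp [hx, hy]
  have hmy : M.mulVec y = mu.im • x + mu.re • y := by
    funext i
    have h1 : (M'.mulVec z i).im = (mu * z i).im := by
      rw [hzeq]; rfl
    have h2 : (M'.mulVec z i).im = (M.mulVec y) i := by
      simp only [Matrix.mulVec, dotProduct, hM', Matrix.map_apply, Complex.im_sum]
      refine Finset.sum_congr rfl fun j _ => ?_
      simp [Complex.mul_im, hy]
    rw [h2] at h1
    rw [h1, Complex.mul_im]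
    simp only [hx, hy, Pi.add_apply, Pi.smul_apply, smul_eq_mul]
    ring
  set u : V := b.equivFun.symm x with hu
  set w : V := b.equivFun.symm y with hw
  have key : ∀ (v : Fin k → ℝ), f (b.equivFun.symm v) = b.equivFun.symm (M.mulVec v) := by
    intro v
    have h1 : M.mulVec ⇑(b.repr (b.equivFun.symm v)) = ⇑(b.repr (f (b.equivFun.symm v))) :=
      LinearMap.toMatrix_mulVec_repr b b f (b.equivFun.symm v)
    have h2 : ⇑(b.repr (b.equivFun.symm v)) = v := by
      funext i
      rw [← Basis.equivFun_apply, LinearEquiv.apply_symm_apply]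
    rw [h2] at h1
    have h3 : b.equivFun (f (b.equivFun.symm v)) = M.mulVec v := by
      funext i
      rw [Basis.equivFun_apply]
      exact (congrFun h1 i).symm
    rw [← h3, LinearEquiv.symm_apply_apply]
  have hfu : f u = mu.re • u - mu.im • w := by
    rw [hu, key, hmx, map_sub, _root_.map_smul, _root_.map_smul]
  have hfw : f w = mu.im • u + mu.re • w := by
    rw [hw, key, hmy, map_add, _root_.map_smul, _root_.map_smul]
  have humem : u ∈ Submodule.span ℝ ({u, w} : Set V) :=
    Submodule.subset_span (Set.mem_insert u {w})
  have hwmem : w ∈ Submodule.span ℝ ({u, w} : Set V) :=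
    Submodule.subset_span (Set.mem_insert_of_mem u rfl)
  refine ⟨Submodule.span ℝ ({u, w} : Set V), ?_, ?_, finrank_span_pair_le u w⟩
  · apply span_pair_inv_aux
    · rw [hfu]
      exact Submodule.sub_mem _ (Submodule.smul_mem _ _ humem) (Submodule.smul_mem _ _ hwmem)
    · rw [hfw]
      exact Submodule.add_mem _ (Submodule.smul_mem _ _ humem) (Submodule.smul_mem _ _ hwmem)
  · have huw : u ≠ 0 ∨ w ≠ 0 := by
      by_contra hc
      push_neg at hc
      apply hz.2
      have hx0 : x = 0 := by
        have h5 := congrArg b.equivFun hc.1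
        rw [hu, LinearEquiv.apply_symm_apply, map_zero] at h5
        exact h5
      have hy0 : y = 0 := by
        have h5 := congrArg b.equivFun hc.2
        rw [hw, LinearEquiv.apply_symm_apply, map_zero] at h5
        exact h5
      funext i
      have h1 : (z i).re = 0 := congrFun hx0 i
      have h2 : (z i).im = 0 := congrFun hy0 i
      exact Complex.ext h1 h2
    have hne : Submodule.span ℝ ({u, w} : Set V) ≠ ⊥ := by
      intro hbot
      rw [hbot] at humem hwmem
      rcases huw with h | h
      · exact h (by simpa using humem)
      · exact h (by simpa using hwmem)
    by_contra hc
    push_neg at hc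
    have h00 : finrank ℝ ↥(Submodule.span ℝ ({u, w} : Set V)) = 0 := by omega
    exact hne (Submodule.finrank_eq_zero.mp h00)

end Hinv

section SchurMatrix
open Module

lemma schur_generic (𝕜 : Type) [RCLike 𝕜] (hinv : Inv2Hyp 𝕜) :
    ∀ (n : ℕ) (M : Matrix (Fin n) (Fin n) 𝕜),
      ∃ Q : Matrix (Fin n) (Fin n) 𝕜, Qᴴ * Q = 1 ∧ Q * Qᴴ = 1 ∧
        ∀ r c : Fin n, (c : ℕ) / 2 < (r : ℕ) / 2 → (Qᴴ * M * Q) r c = 0 := by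
  intro n
  induction n using Nat.strong_induction_on with
  | _ n ih =>
    intro M
    by_cases hn : n ≤ 2
    · refine ⟨1, by simp, by simp, fun r c h => absurd h ?_⟩
      have hr := r.isLt
      have hc := c.isLt
      omega
    push_neg at hn
    obtain ⟨m, rfl⟩ : ∃ m, n = 2 + m := ⟨n - 2, by omega⟩
    set E := EuclideanSpace 𝕜 (Fin (2 + m)) with hE
    let f : E →ₗ[𝕜] E := Matrix.toEuclideanLin M
    have hfE : ∀ x : E, f x = M.mulVec x := fun x => rfl
    have hrankE : finrank 𝕜 E = 2 + m := by
      show finrank 𝕜 (EuclideanSpace 𝕜 (Fin (2 + m))) = 2 + m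
      rw [finrank_euclideanSpace]
      simp
    obtain ⟨W, hWinv, hW2⟩ :=
      exists_invariant_two 𝕜 hinv (2 + m) E (le_of_eq hrankE) (by omega) f
    have hWperp : finrank 𝕜 ↥Wᗮ = m := by
      have := Submodule.finrank_add_finrank_orthogonal W
      omega
    let b1 : OrthonormalBasis (Fin 2) 𝕜 ↥W := (stdOrthonormalBasis 𝕜 ↥W).reindex (finCongr hW2)
    let b2 : OrthonormalBasis (Fin m) 𝕜 ↥Wᗮ :=
      (stdOrthonormalBasis 𝕜 ↥Wᗮ).reindex (finCongr hWperp)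
    let q : Fin 2 ⊕ Fin m → E := Sum.elim (fun i => (b1 i : E)) (fun j => (b2 j : E))
    have hqW : ∀ i, q (Sum.inl i) ∈ W := fun i => (b1 i).2
    have hqWp : ∀ j, q (Sum.inr j) ∈ Wᗮ := fun j => (b2 j).2
    have hq : ∀ a b : Fin 2 ⊕ Fin m, (inner 𝕜 (q a) (q b)) = if a = b then 1 else 0 := by
      intro a b
      rcases a with i | i <;> rcases b with j | j
      · rw [show (inner 𝕜 (q (Sum.inl i)) (q (Sum.inl j))) = inner 𝕜 (b1 i) (b1 j) from
          (Submodule.coe_inner W (b1 i) (b1 j)).symm,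
          orthonormal_iff_ite.mp b1.orthonormal]
        simp
      · rw [Submodule.inner_right_of_mem_orthogonal (hqW i) (hqWp j)]
        simp
      · rw [Submodule.inner_left_of_mem_orthogonal (hqW j) (hqWp i)]
        simp
      · rw [show (inner 𝕜 (q (Sum.inr i)) (q (Sum.inr j))) = inner 𝕜 (b2 i) (b2 j) from
          (Submodule.coe_inner Wᗮ (b2 i) (b2 j)).symm,
          orthonormal_iff_ite.mp b2.orthonormal]
        simp
    let e : Fin 2 ⊕ Fin m ≃ Fin (2 + m) := finSumFinEquiv
    let Q₀ : Matrix (Fin (2 + m)) (Fin (2 + m)) 𝕜 := Matrix.of fun i j => q (e.symm j) i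
    have hQ₀u : Q₀ᴴ * Q₀ = 1 := by
      ext j j'
      rw [Matrix.mul_apply, Matrix.one_apply]
      have hterm : ∀ s, Q₀ᴴ j s * Q₀ s j'
          = (starRingEnd 𝕜) (q (e.symm j) s) * q (e.symm j') s := fun s => rfl
      rw [Finset.sum_congr rfl fun s _ => hterm s]
      have h2 : (inner 𝕜 (q (e.symm j)) (q (e.symm j')))
          = ∑ s, (starRingEnd 𝕜) (q (e.symm j) s) * q (e.symm j') s := by
        rw [PiLp.inner_apply]
        exact Finset.sum_congr rfl fun s _ => by rw [RCLike.inner_apply, mul_comm]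
      rw [← h2, hq]
      by_cases h : j = j'
      · simp [h]
      · have h' : ¬ e.symm j = e.symm j' := fun hh => h (e.symm.injective hh)
        simp [h, h']
    have hQ₀u' : Q₀ * Q₀ᴴ = 1 := mul_eq_one_comm.mp hQ₀u
    set N := Q₀ᴴ * M * Q₀ with hN
    have hNblock : ∀ (i : Fin m) (j : Fin 2), N (e (Sum.inr i)) (e (Sum.inl j)) = 0 := by
      intro i j
      have h1 : N (e (Sum.inr i)) (e (Sum.inl j))
          = ∑ s, (starRingEnd 𝕜) (q (Sum.inr i) s) * (M.mulVec (q (Sum.inl j))) s := by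
        rw [hN, Matrix.mul_assoc, Matrix.mul_apply]
        refine Finset.sum_congr rfl fun s _ => ?_
        have hl : Q₀ᴴ (e (Sum.inr i)) s = (starRingEnd 𝕜) (q (Sum.inr i) s) := by
          rw [Matrix.conjTranspose_apply]
          show star (q (e.symm (e (Sum.inr i))) s) = _
          rw [Equiv.symm_apply_apply]
          rfl
        have hr : (M * Q₀) s (e (Sum.inl j)) = (M.mulVec (q (Sum.inl j))) s := by
          rw [Matrix.mul_apply]
          show (∑ t, M s t * q (e.symm (e (Sum.inl j))) t) = _
          rw [Equiv.symm_apply_apply]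
          rfl
        rw [hl, hr]
      have h2 : (inner 𝕜 (q (Sum.inr i)) (f (q (Sum.inl j))))
          = ∑ s, (starRingEnd 𝕜) (q (Sum.inr i) s) * (M.mulVec (q (Sum.inl j))) s := by
        rw [PiLp.inner_apply]
        refine Finset.sum_congr rfl fun s _ => ?_
        rw [RCLike.inner_apply, hfE, mul_comm]
      rw [h1, ← h2]
      exact Submodule.inner_left_of_mem_orthogonal (hWinv _ (hqW j)) (hqWp i)
    set Nt := N.submatrix e e with hNt
    have hN21 : Nt.toBlocks₂₁ = 0 := by
      ext i j
      exact hNblock i j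
    obtain ⟨Q', hQ'1, hQ'2, hQ'3⟩ := ih m (by omega) Nt.toBlocks₂₂
    set R : Matrix (Fin (2 + m)) (Fin (2 + m)) 𝕜 :=
      (Matrix.fromBlocks 1 0 0 Q').submatrix e.symm e.symm with hR
    have hRH : Rᴴ = (Matrix.fromBlocks 1 0 0 Q'ᴴ).submatrix e.symm e.symm := by
      rw [hR, Matrix.conjTranspose_submatrix, Matrix.fromBlocks_conjTranspose]
      simp
    have hRu : Rᴴ * R = 1 := by
      rw [hRH, hR, Matrix.submatrix_mul_equiv, Matrix.fromBlocks_multiply]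
      simp only [Matrix.one_mul, Matrix.mul_one, Matrix.zero_mul, Matrix.mul_zero,
        add_zero, zero_add, hQ'1]
      rw [show Matrix.fromBlocks (1 : Matrix (Fin 2) (Fin 2) 𝕜) 0 0 (1 : Matrix (Fin m) (Fin m) 𝕜)
          = (1 : Matrix (Fin 2 ⊕ Fin m) (Fin 2 ⊕ Fin m) 𝕜) from Matrix.fromBlocks_one]
      exact Matrix.submatrix_one_equiv e.symm
    refine ⟨Q₀ * R, ?_, ?_, ?_⟩
    · rw [Matrix.conjTranspose_mul, Matrix.mul_assoc, ← Matrix.mul_assoc Q₀ᴴ Q₀ R, hQ₀u,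
        Matrix.one_mul, hRu]
    · rw [mul_eq_one_comm]
      rw [Matrix.conjTranspose_mul, Matrix.mul_assoc, ← Matrix.mul_assoc Q₀ᴴ Q₀ R, hQ₀u,
        Matrix.one_mul, hRu]
    · intro r c hrc
      have hG : (Q₀ * R)ᴴ * M * (Q₀ * R) = Rᴴ * N * R := by
        simp only [hN, Matrix.conjTranspose_mul, Matrix.mul_assoc]
      have hNee : N = Nt.submatrix ⇑e.symm ⇑e.symm := by
        rw [hNt, Matrix.submatrix_submatrix, Equiv.self_comp_symm, Matrix.submatrix_id_id]
      have hprod : Rᴴ * N * R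
          = ((Matrix.fromBlocks 1 0 0 Q'ᴴ) * Nt * (Matrix.fromBlocks 1 0 0 Q')).submatrix
              ⇑e.symm ⇑e.symm := by
        rw [hRH, hR, hNee, Matrix.submatrix_mul_equiv, Matrix.submatrix_mul_equiv]
      have hNtblocks : Nt = Matrix.fromBlocks Nt.toBlocks₁₁ Nt.toBlocks₁₂ 0 Nt.toBlocks₂₂ := by
        rw [← hN21]
        exact (Matrix.fromBlocks_toBlocks Nt).symm
      have hP : (Matrix.fromBlocks 1 0 0 Q'ᴴ) * Nt * (Matrix.fromBlocks 1 0 0 Q')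
          = Matrix.fromBlocks Nt.toBlocks₁₁ (Nt.toBlocks₁₂ * Q') 0
              (Q'ᴴ * Nt.toBlocks₂₂ * Q') := by
        conv_lhs => rw [hNtblocks]
        rw [Matrix.fromBlocks_multiply, Matrix.fromBlocks_multiply]
        simp only [Matrix.one_mul, Matrix.mul_one, Matrix.zero_mul, Matrix.mul_zero,
          add_zero, zero_add]
      rw [hG, hprod, hP, Matrix.submatrix_apply]
      rcases hr' : e.symm r with a | i
      · -- r has index < 2, impossible
        exfalso
        have : r = e (Sum.inl a) := by rw [← hr', Equiv.apply_symm_apply]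
        have hrv : (r : ℕ) = (a : ℕ) := by
          rw [this]
          show ((finSumFinEquiv (Sum.inl a) : Fin (2 + m)) : ℕ) = (a : ℕ)
          rw [finSumFinEquiv_apply_left]
          simp
        have ha := a.isLt
        omega
      rcases hc' : e.symm c with a | j
      · rw [Matrix.fromBlocks_apply₂₁]
        simp
      · rw [Matrix.fromBlocks_apply₂₂]
        have hrv : (r : ℕ) = 2 + (i : ℕ) := by
          have : r = e (Sum.inr i) := by rw [← hr', Equiv.apply_symm_apply]
          rw [this]
          show ((finSumFinEquiv (Sum.inr i) : Fin (2 + m)) : ℕ) = 2 + (i : ℕ)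
          rw [finSumFinEquiv_apply_right]
          simp
        have hcv : (c : ℕ) = 2 + (j : ℕ) := by
          have : c = e (Sum.inr j) := by rw [← hc', Equiv.apply_symm_apply]
          rw [this]
          show ((finSumFinEquiv (Sum.inr j) : Fin (2 + m)) : ℕ) = 2 + (j : ℕ)
          rw [finSumFinEquiv_apply_right]
          simp
        exact hQ'3 i j (by omega)

end SchurMatrix

section Assemble

lemma conjM_apply {a b : ℕ} (X : Matrix (Fin a) (Fin b) ℂ) (r : Fin a) (c : Fin b) :
    conjM X r c = (starRingEnd ℂ) (X r c) := rfl

lemma conjM_mul {a b c : ℕ} (X : Matrix (Fin a) (Fin b) ℂ) (Y : Matrix (Fin b) (Fin c) ℂ) :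
    conjM (X * Y) = conjM X * conjM Y := by
  ext r s
  simp [conjM, Matrix.map_apply, Matrix.mul_apply, map_sum]

lemma conjM_one {a : ℕ} : conjM (1 : Matrix (Fin a) (Fin a) ℂ) = 1 := by
  ext r c
  simp [conjM, Matrix.map_apply, Matrix.one_apply, apply_ite]

lemma conjM_conjM {a b : ℕ} (X : Matrix (Fin a) (Fin b) ℂ) : conjM (conjM X) = X := by
  ext r c
  simp [conjM, Matrix.map_apply]

lemma conjM_H {a b : ℕ} (X : Matrix (Fin a) (Fin b) ℂ) : (conjM X)ᴴ = conjM (Xᴴ) := by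
  ext r c
  simp [conjM, Matrix.conjTranspose_apply, Matrix.map_apply]

lemma conjM_map_ofReal {a b : ℕ} (Y : Matrix (Fin a) (Fin b) ℝ) :
    conjM (Y.map Complex.ofReal) = Y.map Complex.ofReal := by
  ext r c
  simp [conjM, Matrix.map_apply, Complex.conj_ofReal]

lemma mapC_mul {a b c : ℕ} (X : Matrix (Fin a) (Fin b) ℝ) (Y : Matrix (Fin b) (Fin c) ℝ) :
    (X * Y).map Complex.ofReal = X.map Complex.ofReal * Y.map Complex.ofReal := by
  ext r s
  simp only [Matrix.map_apply, Matrix.mul_apply]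
  push_cast
  rfl

lemma mapC_one {a : ℕ} : (1 : Matrix (Fin a) (Fin a) ℝ).map Complex.ofReal = 1 := by
  ext r c
  simp [Matrix.map_apply, Matrix.one_apply, apply_ite]

lemma mapC_H {a b : ℕ} (X : Matrix (Fin a) (Fin b) ℝ) :
    (X.map Complex.ofReal)ᴴ = Xᵀ.map Complex.ofReal := by
  ext r c
  simp [Matrix.conjTranspose_apply, Matrix.map_apply, Complex.conj_ofReal]

lemma schurR {k : ℕ} (M : Matrix (Fin k) (Fin k) ℝ) :
    ∃ Q : Matrix (Fin k) (Fin k) ℝ, Qᵀ * Q = 1 ∧ Q * Qᵀ = 1 ∧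
      ∀ r c : Fin k, (c : ℕ) / 2 < (r : ℕ) / 2 → (Qᵀ * M * Q) r c = 0 := by
  obtain ⟨Q, h1, h2, h3⟩ := schur_generic ℝ hinvR k M
  have ht : Qᴴ = Qᵀ := by
    ext i j
    simp [Matrix.conjTranspose_apply, Matrix.transpose_apply]
  rw [ht] at h1 h2 h3
  exact ⟨Q, h1, h2, h3⟩

end Assemble


theorem stmt8 {n p : ℕ} [NeZero p] (A : Tensor ℝ n n p) :
    ∃ U T : Tensor ℝ n n p,
      tpr (tT U) U = tId ℝ n p ∧ tpr U (tT U) = tId ℝ n p ∧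
      (∃ blk : Fin n → ℕ, Monotone blk ∧
        (∀ j : ℕ, (Finset.univ.filter fun r : Fin n => blk r = j).card ≤ 2) ∧
        (∀ i, ∀ r c : Fin n, blk c < blk r → T i r c = 0)) ∧
      A = tpr U (tpr T (tT U)) := by
  classical
  choose csu hcs1 hcs2 hcs3 using fun (X : Matrix (Fin n) (Fin n) ℂ) =>
    schur_generic ℂ hinvC n X
  choose rsu hrs1 hrs2 hrs3 using fun (Y : Matrix (Fin n) (Fin n) ℝ) => schurR Y
  set Ahat : ZMod p → Matrix (Fin n) (Fin n) ℂ := fun i => fblock (cplx A) i with hAhat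
  have hAsym : ∀ i, Ahat (-i) = conjM (Ahat i) := fun i => fblock_cplx_conj A i
  set Uhat : ZMod p → Matrix (Fin n) (Fin n) ℂ := fun i =>
    if i.val < (-i).val then csu (Ahat i)
    else if (-i).val < i.val then conjM (csu (Ahat (-i)))
    else (rsu ((Ahat i).map Complex.re)).map Complex.ofReal with hUhat
  have hUdef : ∀ i : ZMod p, Uhat i =
      if i.val < (-i).val then csu (Ahat i)
      else if (-i).val < i.val then conjM (csu (Ahat (-i)))
      else (rsu ((Ahat i).map Complex.re)).map Complex.ofReal := fun i => rfl
  have hAreal : ∀ i : ZMod p, i = -i →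
      ((Ahat i).map Complex.re).map Complex.ofReal = Ahat i := by
    intro i hi
    apply isReal_map_re
    intro r c
    have h1 := hAsym i
    rw [← hi] at h1
    have h2 := congrFun (congrFun h1 r) c
    rw [conjM_apply] at h2
    exact Complex.conj_eq_iff_im.mp h2.symm
  have hUsym : ∀ i : ZMod p, Uhat (-i) = conjM (Uhat i) := by
    intro i
    rcases Nat.lt_trichotomy (i.val) ((-i).val) with h | h | h
    · rw [hUdef (-i), if_neg (by rw [neg_neg]; omega), if_pos (by rw [neg_neg]; omega),
        neg_neg, hUdef i, if_pos h]
    · have heq : i = -i := ZMod.val_injective p h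
      rw [← heq, hUdef i, if_neg (by omega), if_neg (by omega), conjM_map_ofReal]
    · rw [hUdef (-i), if_pos (by rw [neg_neg]; omega),
        hUdef i, if_neg (by omega), if_pos h, conjM_conjM]
  have hUu : ∀ i : ZMod p, (Uhat i)ᴴ * Uhat i = 1 ∧ Uhat i * (Uhat i)ᴴ = 1 := by
    intro i
    rcases Nat.lt_trichotomy (i.val) ((-i).val) with h | h | h
    · rw [hUdef i, if_pos h]
      exact ⟨hcs1 _, hcs2 _⟩
    · rw [hUdef i, if_neg (by omega), if_neg (by omega)]
      constructor
      · rw [mapC_H, ← mapC_mul, hrs1, mapC_one]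
      · rw [mapC_H, ← mapC_mul, hrs2, mapC_one]
    · rw [hUdef i, if_neg (by omega), if_pos h]
      constructor
      · rw [conjM_H, ← conjM_mul, hcs1, conjM_one]
      · rw [conjM_H, ← conjM_mul, hcs2, conjM_one]
  set That : ZMod p → Matrix (Fin n) (Fin n) ℂ := fun i => (Uhat i)ᴴ * Ahat i * Uhat i
    with hThat
  have hTdef : ∀ i : ZMod p, That i = (Uhat i)ᴴ * Ahat i * Uhat i := fun i => rfl
  have hTsym : ∀ i : ZMod p, That (-i) = conjM (That i) := by
    intro i
    rw [hTdef, hTdef, hUsym i, hAsym i, conjM_H, ← conjM_mul, ← conjM_mul]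
  have hTtri : ∀ (i : ZMod p) (r c : Fin n), (c : ℕ) / 2 < (r : ℕ) / 2 → That i r c = 0 := by
    intro i r c hrc
    rcases Nat.lt_trichotomy (i.val) ((-i).val) with h | h | h
    · rw [hTdef, hUdef i, if_pos h]
      exact hcs3 (Ahat i) r c hrc
    · have heq : i = -i := ZMod.val_injective p h
      rw [hTdef, hUdef i, if_neg (by omega), if_neg (by omega)]
      set Z := (Ahat i).map Complex.re with hZ
      have hY : Ahat i = Z.map Complex.ofReal := (hAreal i heq).symm
      rw [hY, mapC_H, ← mapC_mul, ← mapC_mul, Matrix.map_apply, hrs3 Z r c hrc,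
        Complex.ofReal_zero]
    · have h1 := hTsym (-i)
      rw [neg_neg] at h1
      rw [h1, conjM_apply]
      have h0 : That (-i) r c = 0 := by
        rw [hTdef, hUdef (-i), if_pos (by rw [neg_neg]; omega)]
        exact hcs3 (Ahat (-i)) r c hrc
      rw [h0, map_zero]
  have hA : ∀ i : ZMod p, Uhat i * (That i * (Uhat i)ᴴ) = Ahat i := by
    intro i
    obtain ⟨hu1, hu2⟩ := hUu i
    rw [hTdef]
    simp only [Matrix.mul_assoc]
    rw [hu2, Matrix.mul_one, ← Matrix.mul_assoc, hu2, Matrix.one_mul]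
  set Uc := invT Uhat with hUc
  set Tc := invT That with hTc
  have hUreal : ∀ k, IsRealM (Uc k) := fun k => invT_isReal Uhat hUsym k
  have hTreal : ∀ k, IsRealM (Tc k) := fun k => invT_isReal That hTsym k
  have hcplxU : cplx (fun k => (Uc k).map Complex.re) = Uc := by
    funext k
    exact isReal_map_re (Uc k) (hUreal k)
  have hcplxT : cplx (fun k => (Tc k).map Complex.re) = Tc := by
    funext k
    exact isReal_map_re (Tc k) (hTreal k)
  have hfbU : ∀ i, fblock Uc i = Uhat i := fun i => by
    rw [hUc]
    exact fblock_invT Uhat i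
  have hfbT : ∀ i, fblock Tc i = That i := fun i => by
    rw [hTc]
    exact fblock_invT That i
  refine ⟨fun k => (Uc k).map Complex.re, fun k => (Tc k).map Complex.re, ?_, ?_, ?_, ?_⟩
  · apply cplx_injective
    rw [cplx_tpr, cplx_tId]
    apply fblock_injective
    funext i
    rw [fblock_tpr, fblock_tId, fblock_cplx_tT, hcplxU, hfbU]
    exact (hUu i).1
  · apply cplx_injective
    rw [cplx_tpr, cplx_tId]
    apply fblock_injective
    funext i
    rw [fblock_tpr, fblock_tId, fblock_cplx_tT, hcplxU, hfbU]
    exact (hUu i).2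
  · refine ⟨fun r => (r : ℕ) / 2, ?_, ?_, ?_⟩
    · intro a b hab
      exact Nat.div_le_div_right (Fin.le_def.mp hab)
    · intro j
      have hcard : ((Finset.univ.filter fun r : Fin n => (r : ℕ) / 2 = j)).card
          ≤ (Finset.range 2).card := by
        refine Finset.card_le_card_of_injOn (fun r => (r : ℕ) % 2) (fun r _ => ?_) ?_
        · rw [Finset.mem_coe, Finset.mem_range]
          show (r : ℕ) % 2 < 2
          omega
        · intro r hr s hs hrs
          simp only [Finset.coe_filter, Set.mem_setOf_eq, Finset.mem_univ, true_and] at hr hs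
          apply Fin.ext
          simp only at hrs
          omega
      simpa using hcard
    · intro i r c hlt
      show ((Tc i).map Complex.re) r c = 0
      rw [Matrix.map_apply]
      have h0 : Tc i r c = 0 := by
        rw [hTc, invT_apply]
        have h1 : ∀ k : ZMod p, ee p (-(k * i)) * That k r c = 0 := fun k => by
          rw [hTtri k r c hlt, mul_zero]
        rw [Finset.sum_congr rfl fun k _ => h1 k, Finset.sum_const_zero, mul_zero]
      rw [h0]
      rfl
  · apply cplx_injective
    rw [cplx_tpr, cplx_tpr]
    apply fblock_injective
    funext i
    rw [fblock_tpr, fblock_tpr, fblock_cplx_tT, hcplxU, hcplxT, hfbU, hfbT]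
    exact (hA i).symm
end

section
/- Moore–Penrose inverse from a real t-SVD: let A ∈ ℝ^{m×n×p} with real t-SVD A = U * S * Vᵀ, where U, V are orthogonal tensors and S is f-diagonal with nonnegative entries, constructed so that S admits a real Moore–Penrose inverse S† (satisfying the four Penrose equations under the t-product). Then X = V * S† * Uᵀ satisfies the four Penrose equations for A: A*X*A = A, X*A*X = X, (A*X)ᵀ = A*X, (X*A)ᵀ = X*A; hence A† = V * S† * Uᵀ and A† is real-valued. -/
open Matrix Complex BigOperators Kronecker

lemma tpr_assoc {F : Type*} [CommRing F] {m n l q p : ℕ} [NeZero p]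
    (A : Tensor F m n p) (B : Tensor F n l p) (C : Tensor F l q p) :
    tpr (tpr A B) C = tpr A (tpr B C) := by
  funext i
  unfold tpr
  simp only [Matrix.sum_mul, Matrix.mul_sum]
  rw [← Fintype.sum_prod_type', ← Fintype.sum_prod_type']
  refine Fintype.sum_equiv
    ⟨fun x => (x.1 + x.2, x.1), fun x => (x.2, x.1 - x.2),
      fun x => by simp, fun x => by simp⟩ _ _ fun x => ?_
  simp only [Equiv.coe_fn_mk]
  rw [Matrix.mul_assoc, sub_sub, add_sub_cancel_left]

lemma tpr_tId {F : Type*} [CommRing F] {m n p : ℕ} [NeZero p]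
    (A : Tensor F m n p) : tpr A (tId F n p) = A := by
  funext i
  unfold tpr tId
  rw [Finset.sum_eq_single 0 (fun j _ hj => by simp [hj]) (by simp)]
  simp

lemma tId_tpr {F : Type*} [CommRing F] {m n p : ℕ} [NeZero p]
    (A : Tensor F m n p) : tpr (tId F m p) A = A := by
  funext i
  unfold tpr tId
  rw [Finset.sum_eq_single i (fun j _ hj => by simp [sub_eq_zero, (Ne.symm hj)]) (by simp)]
  simp

lemma tT_tpr {F : Type*} [CommRing F] {m n l p : ℕ} [NeZero p]
    (A : Tensor F m n p) (B : Tensor F n l p) :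
    tT (tpr A B) = tpr (tT B) (tT A) := by
  funext i
  unfold tpr tT
  rw [Matrix.transpose_sum]
  refine Fintype.sum_equiv ⟨fun j => j + i, fun j => j - i, fun j => by simp, fun j => by simp⟩ _ _ fun j => ?_
  simp only [Equiv.coe_fn_mk, Matrix.transpose_mul, add_sub_cancel_right]
  rw [show -i - j = -(j + i) by ring, show (-(i - (j + i)) : ZMod p) = j by ring]

lemma tT_tT {F : Type*} {m n p : ℕ} (A : Tensor F m n p) : tT (tT A) = A := by
  funext i; simp [tT]
theorem stmt13 {m n p : ℕ} [NeZero p]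
    (A : Tensor ℝ m n p) (U : Tensor ℝ m m p) (S : Tensor ℝ m n p)
    (V : Tensor ℝ n n p) (Sd : Tensor ℝ n m p) (X : Tensor ℝ n m p)
    (hU1 : tpr (tT U) U = tId ℝ m p) (hU2 : tpr U (tT U) = tId ℝ m p)
    (hV1 : tpr (tT V) V = tId ℝ n p) (hV2 : tpr V (tT V) = tId ℝ n p)
    (hSdiag : ∀ i, ∀ (r : Fin m) (c : Fin n), (r : ℕ) ≠ (c : ℕ) → S i r c = 0)
    (hSnn : ∀ i, ∀ (r : Fin m) (c : Fin n), 0 ≤ S i r c)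
    (hP1 : tpr S (tpr Sd S) = S)
    (hP2 : tpr Sd (tpr S Sd) = Sd)
    (hP3 : tT (tpr S Sd) = tpr S Sd)
    (hP4 : tT (tpr Sd S) = tpr Sd S)
    (hA : A = tpr U (tpr S (tT V)))
    (hX : X = tpr V (tpr Sd (tT U))) :
    tpr A (tpr X A) = A ∧
    tpr X (tpr A X) = X ∧
    tT (tpr A X) = tpr A X ∧
    tT (tpr X A) = tpr X A := by
  have cancV : ∀ {q : ℕ} (W : Tensor ℝ n q p), tpr (tT V) (tpr V W) = W := by
    intro q W; rw [← tpr_assoc, hV1, tId_tpr]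
  have cancU : ∀ {q : ℕ} (W : Tensor ℝ m q p), tpr (tT U) (tpr U W) = W := by
    intro q W; rw [← tpr_assoc, hU1, tId_tpr]
  have hAX : tpr A X = tpr U (tpr (tpr S Sd) (tT U)) := by
    rw [hA, hX]; simp only [tpr_assoc]; rw [cancV]
  have hXA : tpr X A = tpr V (tpr (tpr Sd S) (tT V)) := by
    rw [hX, hA]; simp only [tpr_assoc]; rw [cancU]
  refine ⟨?_, ?_, ?_, ?_⟩
  · rw [hX]
    conv_lhs => rw [hA]
    simp only [tpr_assoc]
    rw [cancU, cancV, ← tpr_assoc Sd S (tT V), ← tpr_assoc S (tpr Sd S) (tT V), hP1, hA]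
  · rw [hA]
    conv_lhs => rw [hX]
    simp only [tpr_assoc]
    rw [cancV, cancU, ← tpr_assoc S Sd (tT U), ← tpr_assoc Sd (tpr S Sd) (tT U), hP2, hX]
  · rw [hAX, tT_tpr, tT_tpr, tT_tT, hP3, tpr_assoc]
  · rw [hXA, tT_tpr, tT_tpr, tT_tT, hP4, tpr_assoc]
end
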